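/- Let G be a finite group acting on a unital C*-algebra Q with Rohlin projections {e_g}_{g∈G} ⊆ Q_∞, and let H ≤ G be a subgroup. Set e_H = ∑_{h∈H} e_h, let A = Q^H and P = Q^G be the fixed point algebras, and let F : A → P be the restriction of the canonical expectation E(x) = (1/|G|) ∑_{g∈G} α_g(x). Then e_H ∈ A_∞, F^∞(e_H) = (|H|/|G|)·1, and Index F = |G|/|H|; hence the inclusion P ⊆ A has the Rohlin property (given injectivity of x ↦ x e_H). -/

import Mathlib

/-- A sequence `(a n)` in a normed space is bounded. -/
def IsBddSeq {A : Type*} [Norm A] (a : ℕ → A) : Prop := ∃ C : ℝ, ∀ n, ‖a n‖ ≤ C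

/-- Data exhibiting the algebra `Ainf` as the quotient `A^∞ = ℓ^∞(ℕ, A)/c₀(A)` of
bounded sequences in `A` modulo null sequences; `q` is the quotient map (its values
on unbounded sequences are irrelevant). -/
structure SeqAlg (A : Type*) [NormedRing A] [StarRing A] [NormedAlgebra ℂ A]
    (Ainf : Type*) [Ring Ainf] [StarRing Ainf] [Algebra ℂ Ainf] where
  q : (ℕ → A) → Ainf
  surj : ∀ z : Ainf, ∃ a : ℕ → A, IsBddSeq a ∧ q a = z
  q_add : ∀ a b : ℕ → A, IsBddSeq a → IsBddSeq b → q (a + b) = q a + q b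
  q_mul : ∀ a b : ℕ → A, IsBddSeq a → IsBddSeq b → q (a * b) = q a * q b
  q_smul : ∀ (c : ℂ) (a : ℕ → A), IsBddSeq a → q (c • a) = c • q a
  q_star : ∀ a : ℕ → A, IsBddSeq a → q (star a) = star (q a)
  q_one : q 1 = 1
  q_eq_zero_iff : ∀ a : ℕ → A, IsBddSeq a →
    (q a = 0 ↔ Filter.Tendsto (fun n => ‖a n‖) Filter.atTop (nhds 0))

/-- The canonical embedding of `A` into `Ainf` as (classes of) constant sequences. -/
def SeqAlg.incl {A : Type*} [NormedRing A] [StarRing A] [NormedAlgebra ℂ A]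
    {Ainf : Type*} [Ring Ainf] [StarRing Ainf] [Algebra ℂ Ainf]
    (S : SeqAlg A Ainf) (x : A) : Ainf := S.q fun _ => x

section Aux

variable {A : Type*} [NormedRing A] [StarRing A] [NormedAlgebra ℂ A]
variable {Ainf : Type*} [Ring Ainf] [StarRing Ainf] [Algebra ℂ Ainf]

lemma isBddSeq_const (x : A) : IsBddSeq (fun _ : ℕ => x) := ⟨‖x‖, fun _ => le_rfl⟩

lemma isBddSeq_sum {ι : Type*} (s : Finset ι) (f : ι → ℕ → A)
    (h : ∀ i ∈ s, IsBddSeq (f i)) : IsBddSeq (fun n => ∑ i ∈ s, f i n) := by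
  classical
  induction s using Finset.induction_on with
  | empty => exact ⟨0, fun n => by simp⟩
  | @insert a s ha ih =>
    obtain ⟨C, hC⟩ := h a (Finset.mem_insert_self a s)
    obtain ⟨D, hD⟩ := ih (fun i hi => h i (Finset.mem_insert_of_mem hi))
    refine ⟨C + D, fun n => ?_⟩
    show ‖∑ i ∈ insert a s, f i n‖ ≤ C + D
    rw [Finset.sum_insert ha]
    exact (norm_add_le _ _).trans (add_le_add (hC n) (hD n))

lemma IsBddSeq.csmul (c : ℂ) {a : ℕ → A} (h : IsBddSeq a) :
    IsBddSeq (fun n => c • a n) := by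
  obtain ⟨C, hC⟩ := h
  refine ⟨‖c‖ * C, fun n => ?_⟩
  rw [norm_smul]
  exact mul_le_mul_of_nonneg_left (hC n) (norm_nonneg c)

lemma IsBddSeq.mul {a b : ℕ → A} (ha : IsBddSeq a) (hb : IsBddSeq b) :
    IsBddSeq (fun n => a n * b n) := by
  obtain ⟨C, hC⟩ := ha; obtain ⟨D, hD⟩ := hb
  refine ⟨max C 0 * max D 0, fun n => (norm_mul_le _ _).trans ?_⟩
  exact mul_le_mul ((hC n).trans (le_max_left _ _)) ((hD n).trans (le_max_left _ _))
    (norm_nonneg _) (le_max_right C 0)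

lemma SeqAlg.q_zero (S : SeqAlg A Ainf) : S.q 0 = 0 := by
  rw [S.q_eq_zero_iff 0 ⟨0, fun n => by simp⟩]
  simpa using (tendsto_const_nhds : Filter.Tendsto (fun _ : ℕ => (0:ℝ)) Filter.atTop (nhds 0))

lemma SeqAlg.q_sum (S : SeqAlg A Ainf) {ι : Type*} (s : Finset ι) (f : ι → ℕ → A)
    (h : ∀ i ∈ s, IsBddSeq (f i)) :
    S.q (fun n => ∑ i ∈ s, f i n) = ∑ i ∈ s, S.q (f i) := by
  classical
  induction s using Finset.induction_on with
  | empty => simp only [Finset.sum_empty]; exact S.q_zero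
  | @insert a s ha ih =>
    have hfa := h a (Finset.mem_insert_self a s)
    have hfs : ∀ i ∈ s, IsBddSeq (f i) := fun i hi => h i (Finset.mem_insert_of_mem hi)
    have hsum := isBddSeq_sum s f hfs
    have he : (fun n => ∑ i ∈ insert a s, f i n) = (f a + fun n => ∑ i ∈ s, f i n) := by
      funext n; simp [Finset.sum_insert ha]
    rw [he, S.q_add _ _ hfa hsum, ih hfs, Finset.sum_insert ha]

lemma SeqAlg.incl_eq_zero (S : SeqAlg A Ainf) {x : A} (h : S.incl x = 0) : x = 0 := by
  have h1 := (S.q_eq_zero_iff _ (isBddSeq_const x)).mp h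
  have h2 : (0:ℝ) = ‖x‖ := tendsto_nhds_unique h1 tendsto_const_nhds
  exact norm_eq_zero.mp h2.symm

end Aux

/-- let `G` be a finite group acting on a unital C*-algebra `Q` with
Rohlin projections `{e_g} ⊆ Q_∞` and let `H ≤ G`. Put `e_H = ∑_{h∈H} e_h`, let
`A = Q^H ⊇ P = Q^G` be the fixed point algebras and `F = E|_A : A → P` the
restriction of the canonical expectation `E(x) = (1/|G|) ∑_g α_g x`. Then
`e_H` is a projection in `A_∞ = A^∞ ∩ A'`, `F^∞(e_H) = (|H|/|G|)·1`, and
`Index F = |G|/|H|` (i.e. `F` has a quasi-basis in `A` with index sum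
`(|G|/|H|)·1`); hence the inclusion `P ⊆ A` has the Rohlin property (granted the
injectivity of `x ↦ x e_H` on `A`). -/
theorem subgroup_fixed_point_inclusion_rohlin
    {Q : Type*} [NormedRing Q] [StarRing Q] [CStarRing Q] [NormedAlgebra ℂ Q]
    [CompleteSpace Q] [StarModule ℂ Q]
    {G : Type*} [Group G] [Fintype G] [MulSemiringAction G Q]
    (hstar : ∀ (g : G) (x : Q), g • (star x) = star (g • x))
    (hsmul : ∀ (g : G) (c : ℂ) (x : Q), g • (c • x) = c • (g • x))
    (H : Subgroup G) [Fintype H]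
    {Qinf : Type*} [Ring Qinf] [StarRing Qinf] [Algebra ℂ Qinf] (S : SeqAlg Q Qinf)
    (αinf : G → Qinf → Qinf)
    (hαinf : ∀ (g : G) (a : ℕ → Q), IsBddSeq a →
      αinf g (S.q a) = S.q fun n => g • a n)
    -- Rohlin projections for the action of `G`
    (e : G → Qinf)
    (he_idem : ∀ g, e g * e g = e g) (he_star : ∀ g, star (e g) = e g)
    (he_orth : ∀ g h : G, g ≠ h → e g * e h = 0)
    (he_sum : ∑ g : G, e g = 1)
    (he_comm : ∀ (g : G) (x : Q), Commute (e g) (S.incl x))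
    (he_shift : ∀ g h : G, αinf g (e h) = e (g * h))
    -- the fixed point algebras `A = Q^H ⊇ P = Q^G`
    (A P : Set Q) (hA : A = {x : Q | ∀ h ∈ H, h • x = x})
    (hP : P = {x : Q | ∀ g : G, g • x = x})
    -- the canonical conditional expectation `E : Q → Q^G` and its coordinatewise
    -- extension `E^∞`; `F` is its restriction to `A`, a conditional expectation onto `P`
    (E : Q → Q) (hE : ∀ x : Q, E x = ((Fintype.card G : ℂ))⁻¹ • ∑ g : G, g • x)
    (Einf : Qinf → Qinf)
    (hEinf : ∀ a : ℕ → Q, IsBddSeq a → Einf (S.q a) = S.q fun n => E (a n))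
    -- `Index E = |G|` and `Index E_H = |H|`: quasi-bases for `E` and for
    -- `E_H(x) = (1/|H|) ∑_{h∈H} α_h x`
    (EH : Q → Q) (hEH : ∀ x : Q, EH x = ((Fintype.card H : ℂ))⁻¹ • ∑ h : H, (h : G) • x)
    (hqE : ∃ (m : ℕ) (u v : Fin m → Q),
      (∀ a : Q, (a = ∑ i, u i * E (v i * a)) ∧ (a = ∑ i, E (a * u i) * v i)) ∧
      ∑ i, u i * v i = (Fintype.card G : ℂ) • (1 : Q))
    (hqEH : ∃ (m : ℕ) (u v : Fin m → Q),
      (∀ a : Q, (a = ∑ i, u i * EH (v i * a)) ∧ (a = ∑ i, EH (a * u i) * v i)) ∧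
      ∑ i, u i * v i = (Fintype.card H : ℂ) • (1 : Q))
    -- injectivity of `x ↦ x e_H` on `A`
    (hinj : ∀ x ∈ A, S.incl x * (∑ h : H, e (h : G)) = 0 → x = 0) :
    letI eH : Qinf := ∑ h : H, e (h : G)
    -- `e_H` is a projection in `A_∞ = A^∞ ∩ A'`
    (eH * eH = eH ∧ star eH = eH) ∧
    (∃ a : ℕ → Q, IsBddSeq a ∧ (∀ n, a n ∈ A) ∧ S.q a = eH) ∧
    (∀ x ∈ A, Commute eH (S.incl x)) ∧
    -- `F^∞(e_H) = (|H|/|G|)·1`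
    Einf eH = (((Fintype.card H : ℂ) / (Fintype.card G : ℂ))) • 1 ∧
    -- `Index F = |G|/|H|`: `F = E|_A` has a quasi-basis in `A` with index sum
    -- `(|G|/|H|)·1`, so the inclusion `P ⊆ A` has the Rohlin property
    (∃ (m : ℕ) (u v : Fin m → Q), (∀ i, u i ∈ A) ∧ (∀ i, v i ∈ A) ∧
      (∀ a ∈ A, (a = ∑ i, u i * E (v i * a)) ∧ (a = ∑ i, E (a * u i) * v i)) ∧
      ∑ i, u i * v i = ((Fintype.card G : ℂ) / (Fintype.card H : ℂ)) • (1 : Q)) := by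
  classical
  letI : CStarAlgebra Q :=
    { toNormedRing := inferInstance, toStarRing := inferInstance,
      toCompleteSpace := inferInstance, toCStarRing := inferInstance,
      toNormedAlgebra := inferInstance, toStarModule := inferInstance }
  -- the action is isometric
  have hnorm : ∀ (g : G) (x : Q), ‖g • x‖ = ‖x‖ := by
    intro g x
    let φ : Q ≃⋆ₐ[ℂ] Q :=
      { toFun := fun y => g • y
        invFun := fun y => g⁻¹ • y
        left_inv := fun y => inv_smul_smul g y
        right_inv := fun y => smul_inv_smul g y
        map_mul' := fun a b => smul_mul' g a b
        map_add' := fun a b => smul_add g a b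
        map_smul' := fun c a => hsmul g c a
        map_star' := fun a => (hstar g a) }
    exact StarAlgEquiv.norm_map φ x
  have bddG : ∀ (g : G) (a : ℕ → Q), IsBddSeq a → IsBddSeq (fun n => g • a n) := by
    rintro g a ⟨C, hC⟩
    exact ⟨C, fun n => by rw [hnorm]; exact hC n⟩
  set cG : ℂ := (Fintype.card G : ℂ) with hcG
  set cH : ℂ := (Fintype.card H : ℂ) with hcHdef
  have hcH : cH ≠ 0 := Nat.cast_ne_zero.mpr Fintype.card_ne_zero
  have hcG0 : cG ≠ 0 := Nat.cast_ne_zero.mpr Fintype.card_ne_zero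
  set eH : Qinf := ∑ h : H, e (h : G) with heHdef
  -- projection
  have heH_idem : eH * eH = eH := by
    rw [heHdef, Finset.sum_mul_sum]
    refine Finset.sum_congr rfl fun h _ => ?_
    rw [Fintype.sum_eq_single h fun k hk =>
      he_orth _ _ (fun hc => hk (Subtype.coe_injective hc.symm))]
    exact he_idem _
  have heH_star : star eH = eH := by
    rw [heHdef, star_sum]
    exact Finset.sum_congr rfl fun h _ => he_star _
  -- αinf g eH
  have hshift : ∀ g : G, αinf g eH = ∑ k : H, e (g * (k : G)) := by
    intro g
    choose p hbp hqp using fun k : H => S.surj (e (k : G))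
    have h1 : eH = S.q (fun n => ∑ k : H, p k n) := by
      rw [S.q_sum Finset.univ p (fun k _ => hbp k)]
      exact (Finset.sum_congr rfl fun k _ => (hqp k).symm)
    rw [h1, hαinf g _ (isBddSeq_sum Finset.univ p (fun k _ => hbp k))]
    have h2 : (fun n => g • ∑ k : H, p k n) = fun n => ∑ k : H, g • p k n := by
      funext n; exact Finset.smul_sum
    rw [h2, S.q_sum Finset.univ _ (fun k _ => bddG g (p k) (hbp k))]
    exact Finset.sum_congr rfl fun k _ => by
      rw [← hαinf g (p k) (hbp k), hqp, he_shift]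
  have hshiftH : ∀ h : H, αinf (h : G) eH = eH := by
    intro h
    rw [hshift]
    refine Fintype.sum_equiv (Equiv.mulLeft h) _ _ fun k => ?_
    simp [Equiv.coe_mulLeft]
  -- a representing sequence for eH
  obtain ⟨b, hb, hqb⟩ := S.surj eH
  have hbsum : IsBddSeq (fun n => ∑ h : H, (h : G) • b n) :=
    isBddSeq_sum Finset.univ _ (fun h _ => bddG _ b hb)
  have hqgb : ∀ g : G, S.q (fun n => g • b n) = αinf g eH := by
    intro g; rw [← hqb, hαinf g b hb]
  -- membership of EH x in A
  have hEH_mem : ∀ x : Q, EH x ∈ A := by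
    intro x
    rw [hA]
    intro g hg
    rw [hEH, hsmul, Finset.smul_sum]
    congr 1
    refine Fintype.sum_equiv (Equiv.mulLeft (⟨g, hg⟩ : H)) _ _ fun k => ?_
    simp [Equiv.coe_mulLeft, smul_smul]
  have hAfix : ∀ x ∈ A, ∀ h : H, (h : G) • x = x := by
    intro x hx h; rw [hA] at hx; exact hx h h.2
  -- the A^∞ part
  have hmemA : ∃ a : ℕ → Q, IsBddSeq a ∧ (∀ n, a n ∈ A) ∧ S.q a = eH := by
    refine ⟨fun n => EH (b n), ?_, fun n => hEH_mem _, ?_⟩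
    · have : IsBddSeq (fun n => cH⁻¹ • ∑ h : H, (h : G) • b n) := hbsum.csmul _
      obtain ⟨C, hC⟩ := this
      exact ⟨C, fun n => by simpa only [hEH] using hC n⟩
    · have h1 : (fun n => EH (b n)) = fun n => cH⁻¹ • ∑ h : H, (h : G) • b n := by
        funext n; exact hEH (b n)
      rw [h1]
      have h2 : (fun n => cH⁻¹ • ∑ h : H, (h : G) • b n)
          = cH⁻¹ • (fun n => ∑ h : H, (h : G) • b n) := rfl
      rw [h2, S.q_smul _ _ hbsum,
        S.q_sum Finset.univ _ (fun h _ => bddG _ b hb)]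
      have h3 : ∀ h : H, S.q (fun n => (h : G) • b n) = eH := fun h => by
        rw [hqgb, hshiftH]
      rw [Finset.sum_congr rfl fun h _ => h3 h, Finset.sum_const, Finset.card_univ,
        ← Nat.cast_smul_eq_nsmul ℂ, smul_smul, inv_mul_cancel₀ hcH, one_smul]
  -- commutation
  have hcomm : ∀ x ∈ A, Commute eH (S.incl x) := by
    intro x _
    exact Commute.sum_left _ _ _ fun h _ => he_comm _ x
  -- E^∞ of eH
  have hEinfeH : Einf eH = (cH / cG) • 1 := by
    rw [← hqb, hEinf b hb]
    have h1 : (fun n => E (b n)) = cG⁻¹ • (fun n => ∑ g : G, g • b n) := by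
      funext n; exact hE (b n)
    have hbsumG : IsBddSeq (fun n => ∑ g : G, g • b n) :=
      isBddSeq_sum Finset.univ _ (fun g _ => bddG _ b hb)
    rw [h1, S.q_smul _ _ hbsumG, S.q_sum Finset.univ _ (fun g _ => bddG _ b hb)]
    have h2 : ∀ g : G, S.q (fun n => g • b n) = ∑ k : H, e (g * (k : G)) := by
      intro g; rw [hqgb, hshift]
    rw [Finset.sum_congr rfl fun g _ => h2 g, Finset.sum_comm]
    have h3 : ∀ k : H, ∑ g : G, e (g * (k : G)) = 1 := by
      intro k
      rw [← he_sum]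
      refine Fintype.sum_equiv (Equiv.mulRight (k : G)) _ _ fun g => ?_
      simp [Equiv.coe_mulRight]
    rw [Finset.sum_congr rfl fun k _ => h3 k, Finset.sum_const, Finset.card_univ,
      ← Nat.cast_smul_eq_nsmul ℂ, smul_smul]
    rw [div_eq_mul_inv, mul_comm]
  -- ### the quasi-basis part
  obtain ⟨m, u, v, huv, husum⟩ := hqE
  -- E lands in the G-fixed points
  have hfixE : ∀ (x : Q) (g : G), g • E x = E x := by
    intro x g
    rw [hE, hsmul, Finset.smul_sum]
    congr 1
    refine Fintype.sum_equiv (Equiv.mulLeft g) _ _ fun k => ?_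
    simp [Equiv.coe_mulLeft, smul_smul]
  -- E is invariant
  have hEinv : ∀ (x : Q) (g : G), E (g • x) = E x := by
    intro x g
    rw [hE, hE]
    congr 1
    refine Fintype.sum_equiv (Equiv.mulRight g) _ _ fun k => ?_
    simp [Equiv.coe_mulRight, smul_smul]
  -- E is ℂ-linear enough
  have hE_smulC : ∀ (c : ℂ) (x : Q), E (c • x) = c • E x := by
    intro c x
    rw [hE, hE]
    have h1 : ∀ k : G, k • (c • x) = c • (k • x) := fun k => hsmul k c x
    rw [Finset.sum_congr rfl fun k _ => h1 k, ← Finset.smul_sum, smul_smul, smul_smul,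
      mul_comm]
  have hE_sum_H : ∀ f : H → Q, E (∑ h : H, f h) = ∑ h : H, E (f h) := by
    intro f
    simp only [hE]
    rw [← Finset.smul_sum]
    congr 1
    calc ∑ k : G, k • ∑ h : H, f h = ∑ k : G, ∑ h : H, k • f h := by
          exact Finset.sum_congr rfl fun k _ => Finset.smul_sum
      _ = ∑ h : H, ∑ k : G, k • f h := Finset.sum_comm
  -- EH facts
  have hEH_sum : ∀ f : Fin m → Q, EH (∑ i, f i) = ∑ i, EH (f i) := by
    intro f
    simp only [hEH]
    rw [← Finset.smul_sum]
    congr 1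
    calc ∑ h : H, (h : G) • ∑ i, f i = ∑ h : H, ∑ i, (h : G) • f i := by
          exact Finset.sum_congr rfl fun h _ => Finset.smul_sum
      _ = ∑ i, ∑ h : H, (h : G) • f i := Finset.sum_comm
  have hEH_fix : ∀ x ∈ A, EH x = x := by
    intro x hx
    rw [hEH, Finset.sum_congr rfl fun h _ => hAfix x hx h, Finset.sum_const,
      Finset.card_univ, ← Nat.cast_smul_eq_nsmul ℂ, smul_smul, inv_mul_cancel₀ hcH,
      one_smul]
  have hEHrmod : ∀ (x p : Q), (∀ h : H, (h : G) • p = p) → EH (x * p) = EH x * p := by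
    intro x p hp
    rw [hEH, hEH, smul_mul_assoc, Finset.sum_mul]
    congr 1
    refine Finset.sum_congr rfl fun h _ => ?_
    rw [smul_mul', hp h]
  have hEHlmod : ∀ (x p : Q), (∀ h : H, (h : G) • p = p) → EH (p * x) = p * EH x := by
    intro x p hp
    rw [hEH, hEH, mul_smul_comm, Finset.mul_sum]
    congr 1
    refine Finset.sum_congr rfl fun h _ => ?_
    rw [smul_mul', hp h]
  have hE_EH : ∀ x : Q, E (EH x) = E x := by
    intro x
    rw [hEH, hE_smulC, hE_sum_H]
    have h1 : ∑ h : H, E ((h : G) • x) = ∑ h : H, E x :=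
      Finset.sum_congr rfl fun h _ => hEinv x (h : G)
    rw [h1, Finset.sum_const, Finset.card_univ, ← Nat.cast_smul_eq_nsmul ℂ, smul_smul,
      inv_mul_cancel₀ hcH, one_smul]
  -- twisted reconstruction
  have htw : ∀ (g : G) (y : Q), ∑ i, (g • u i) * E (v i * y) = g • y := by
    intro g y
    conv_rhs => rw [(huv y).1]
    rw [Finset.smul_sum]
    refine Finset.sum_congr rfl fun i _ => ?_
    rw [smul_mul', hfixE (v i * y) g]
  -- the twisted index elements
  have hT'T : ∀ s : G, (∑ i, u i * (s • v i)) = ∑ j, (s⁻¹ • u j) * v j := by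
    intro s
    have hE' : ∀ (i : Fin m) (j : Fin m), E ((s • v i) * u j) = E (v i * (s⁻¹ • u j)) := by
      intro i j
      have h1 : (s • v i) * u j = s • (v i * (s⁻¹ • u j)) := by
        rw [smul_mul', smul_inv_smul]
      rw [h1, hEinv]
    calc ∑ i, u i * (s • v i)
        = ∑ i, u i * ∑ j, E ((s • v i) * u j) * v j := by
          exact Finset.sum_congr rfl fun i _ => by rw [← (huv (s • v i)).2]
      _ = ∑ j, (∑ i, u i * E (v i * (s⁻¹ • u j))) * v j := by
          simp_rw [Finset.mul_sum, hE']
          rw [Finset.sum_comm]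
          simp_rw [Finset.sum_mul, mul_assoc]
      _ = ∑ j, (s⁻¹ • u j) * v j := by
          exact Finset.sum_congr rfl fun j _ => by rw [← (huv (s⁻¹ • u j)).1]
  have hTcom : ∀ (s : G) (x : Q),
      (∑ i, u i * (s • v i)) * x = (s⁻¹ • x) * ∑ i, u i * (s • v i) := by
    intro s x
    rw [hT'T s]
    calc (∑ j, (s⁻¹ • u j) * v j) * x = ∑ j, (s⁻¹ • u j) * (v j * x) := by
          rw [Finset.sum_mul]; simp_rw [mul_assoc]
      _ = ∑ j, (s⁻¹ • u j) * ∑ k, E ((v j * x) * u k) * v k := by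
          exact Finset.sum_congr rfl fun j _ => by rw [← (huv (v j * x)).2]
      _ = ∑ k, (∑ j, (s⁻¹ • u j) * E (v j * (x * u k))) * v k := by
          simp_rw [Finset.mul_sum, mul_assoc]
          rw [Finset.sum_comm]
          simp_rw [Finset.sum_mul, mul_assoc]
      _ = ∑ k, (s⁻¹ • (x * u k)) * v k := by
          exact Finset.sum_congr rfl fun k _ => by rw [htw s⁻¹ (x * u k)]
      _ = (s⁻¹ • x) * ∑ k, (s⁻¹ • u k) * v k := by
          rw [Finset.mul_sum]
          exact Finset.sum_congr rfl fun k _ => by rw [smul_mul', mul_assoc]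
  -- vanishing of twisted intertwiners, via the Rohlin projections
  have hvanish : ∀ t : G, t ≠ 1 → ∀ d : Q, (∀ x : Q, d * x = (t • x) * d) → d = 0 := by
    intro t ht d hd
    have hDe : ∀ g : G, S.incl d * e g = e (t * g) * S.incl d := by
      intro g
      obtain ⟨p, hp, hqp⟩ := S.surj (e g)
      have h1 : S.incl d * e g = S.q (fun n => d * p n) := by
        rw [← hqp, SeqAlg.incl, ← S.q_mul _ _ (isBddSeq_const d) hp]
        rfl
      have h2 : (fun n => d * p n) = fun n => (t • p n) * d := funext fun n => hd (p n)
      have h3 : S.q (fun n => (t • p n) * d) = αinf t (e g) * S.incl d := by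
        rw [← hqp, hαinf t p hp, SeqAlg.incl, ← S.q_mul _ _ (bddG t p hp) (isBddSeq_const d)]
        rfl
      rw [h1, h2, h3, he_shift]
    have hez : ∀ g : G, e g * S.incl d = 0 := by
      intro g
      have hgne : g ≠ t * g := fun hc => ht (by
        have := hc.symm
        rwa [mul_eq_right] at this)
      have h1 : e g * S.incl d = e (t * g) * S.incl d := by
        rw [(he_comm g d).eq, hDe g]
      calc e g * S.incl d = e g * (e g * S.incl d) := by rw [← mul_assoc, he_idem]
        _ = e g * (e (t * g) * S.incl d) := by rw [h1]
        _ = 0 := by rw [← mul_assoc, he_orth g (t * g) hgne, zero_mul]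
    have h0 : S.incl d = 0 := by
      have h1 : S.incl d = (∑ g : G, e g) * S.incl d := by rw [he_sum, one_mul]
      rw [h1, Finset.sum_mul]
      exact Finset.sum_eq_zero fun g _ => hez g
    exact S.incl_eq_zero h0
  have hT0 : ∀ s : G, s ≠ 1 → (∑ i, u i * (s • v i)) = 0 := by
    intro s hs
    exact hvanish s⁻¹ (inv_ne_one.mpr hs) _ (hTcom s)
  -- the index sum
  have hindex : ∑ i, EH (u i) * EH (v i) = (cG / cH) • 1 := by
    have key : ∀ h k : H, ∑ i, ((h : G) • u i) * ((k : G) • v i)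
        = (h : G) • ∑ i, u i * (((h : G)⁻¹ * (k : G)) • v i) := by
      intro h k
      rw [Finset.smul_sum]
      refine Finset.sum_congr rfl fun i _ => ?_
      rw [smul_mul', smul_smul, mul_inv_cancel_left]
    have key2 : ∀ h : H, ∑ k : H, ∑ i, ((h : G) • u i) * ((k : G) • v i) = cG • (1 : Q) := by
      intro h
      rw [Finset.sum_congr rfl fun k _ => key h k]
      rw [Fintype.sum_eq_single h fun k hk => by
        rw [hT0 _ (fun hc => hk (Subtype.coe_injective ((inv_mul_eq_one.mp hc).symm))),
          smul_zero]]
      rw [inv_mul_cancel]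
      have h1 : ∀ i : Fin m, u i * ((1 : G) • v i) = u i * v i := fun i => by rw [one_smul]
      rw [Finset.sum_congr rfl fun i _ => h1 i, husum, hsmul, smul_one]
    calc ∑ i, EH (u i) * EH (v i)
        = ∑ i, (cH⁻¹ • ∑ h : H, (h : G) • u i) * (cH⁻¹ • ∑ k : H, (k : G) • v i) := by
          simp only [hEH]
      _ = (cH⁻¹ * cH⁻¹) • ∑ i, (∑ h : H, (h : G) • u i) * (∑ k : H, (k : G) • v i) := by
          rw [Finset.smul_sum]
          refine Finset.sum_congr rfl fun i _ => ?_
          rw [smul_mul_assoc, mul_smul_comm, smul_smul]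
      _ = (cH⁻¹ * cH⁻¹) • ∑ h : H, ∑ k : H, ∑ i, ((h : G) • u i) * ((k : G) • v i) := by
          congr 1
          simp_rw [Finset.sum_mul_sum]
          rw [Finset.sum_comm]
          exact Finset.sum_congr rfl fun h _ => Finset.sum_comm
      _ = (cH⁻¹ * cH⁻¹) • ∑ _h : H, cG • (1 : Q) := by
          rw [Finset.sum_congr rfl fun h _ => key2 h]
      _ = (cG / cH) • 1 := by
          rw [Finset.sum_const, Finset.card_univ, ← Nat.cast_smul_eq_nsmul ℂ,
            smul_smul, smul_smul]
          congr 1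
          field_simp
          exact hcHdef.symm
  -- reconstruction on A
  have hPfixH : ∀ y : Q, ∀ h : H, (h : G) • E y = E y := fun y h => hfixE y (h : G)
  have hrecon : ∀ a ∈ A,
      (a = ∑ i, EH (u i) * E (EH (v i) * a)) ∧ (a = ∑ i, E (a * EH (u i)) * EH (v i)) := by
    intro a ha
    constructor
    · calc a = EH a := (hEH_fix a ha).symm
        _ = EH (∑ i, u i * E (v i * a)) := by rw [← (huv a).1]
        _ = ∑ i, EH (u i * E (v i * a)) := hEH_sum _
        _ = ∑ i, EH (u i) * E (v i * a) := by
            exact Finset.sum_congr rfl fun i _ => hEHrmod (u i) _ (hPfixH (v i * a))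
        _ = ∑ i, EH (u i) * E (EH (v i) * a) := by
            refine Finset.sum_congr rfl fun i _ => ?_
            rw [← hEHrmod (v i) a (hAfix a ha), hE_EH]
    · calc a = EH a := (hEH_fix a ha).symm
        _ = EH (∑ i, E (a * u i) * v i) := by rw [← (huv a).2]
        _ = ∑ i, EH (E (a * u i) * v i) := hEH_sum _
        _ = ∑ i, E (a * u i) * EH (v i) := by
            exact Finset.sum_congr rfl fun i _ => hEHlmod (v i) _ (hPfixH (a * u i))
        _ = ∑ i, E (a * EH (u i)) * EH (v i) := by
            refine Finset.sum_congr rfl fun i _ => ?_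
            rw [← hEHlmod (u i) a (hAfix a ha), hE_EH]
  exact ⟨⟨heH_idem, heH_star⟩, hmemA, hcomm, hEinfeH,
    ⟨m, fun i => EH (u i), fun i => EH (v i), fun i => hEH_mem (u i),
      fun i => hEH_mem (v i), hrecon, hindex⟩⟩
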